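/- In a simple 2-connected plane graph with no 4-cycles and no 6-cycles, every face of length 7 is incident to at most six 3-vertices that are incident to a 3-face. -/

import Mathlib

open SimpleGraph

/-- `G` contains no cycle of length `n`. -/
def NoCycleLen {V : Type} (G : SimpleGraph V) (n : ℕ) : Prop :=
  ∀ (v : V) (w : G.Walk v v), w.IsCycle → w.length ≠ n

/-- `(V1, V2)` partitions the vertex subset `s`, with `G[V1]` a forest of maximum
degree at most 2 and `G[V2]` a forest. -/
def IsF2FPartOn {V : Type} (G : SimpleGraph V) (s V1 V2 : Set V) : Prop :=
  V1 ∪ V2 = s ∧ Disjoint V1 V2 ∧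
  (G.induce V1).IsAcyclic ∧
  (∀ x : V1, ((G.induce V1).neighborSet x).ncard ≤ 2) ∧
  (G.induce V2).IsAcyclic

/-- A combinatorial plane embedding of `G`: a finite set of faces, each with a closed
boundary walk, satisfying the handshaking identity for faces and Euler's formula. -/
structure PlaneEmbedding {V : Type} [Fintype V] [DecidableEq V]
    (G : SimpleGraph V) [DecidableRel G.Adj] : Type 1 where
  Face : Type
  faceFintype : Fintype Face
  boundary : Face → List V
  boundary_ne : ∀ f, boundary f ≠ []
  boundary_walk : ∀ f, (boundary f ++ (boundary f).take 1).Chain' G.Adj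
  edge_count : ∑ f ∈ (@Finset.univ Face faceFintype), (boundary f).length
      = 2 * G.edgeFinset.card
  euler : (Fintype.card V : ℤ) - G.edgeFinset.card + (@Fintype.card Face faceFintype) = 2

/-- `G` is planar: it admits a plane embedding. -/
def SimpleGraph.Planar {V : Type} [Fintype V] [DecidableEq V]
    (G : SimpleGraph V) [DecidableRel G.Adj] : Prop :=
  Nonempty (PlaneEmbedding G)

namespace PlaneEmbedding

variable {V : Type} [Fintype V] [DecidableEq V] {G : SimpleGraph V} [DecidableRel G.Adj]

/-- The length of the boundary walk of a face. -/
def faceLen (E : PlaneEmbedding G) (f : E.Face) : ℕ := (E.boundary f).length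

/-- A vertex is incident to a face if it lies on the boundary walk. -/
def IncidentVF (E : PlaneEmbedding G) (v : V) (f : E.Face) : Prop := v ∈ E.boundary f

/-- The edges of the boundary walk of a face (cyclically consecutive pairs). -/
def faceEdges (E : PlaneEmbedding G) (f : E.Face) : List (Sym2 V) :=
  ((E.boundary f).zip ((E.boundary f).rotate 1)).map fun p => s(p.1, p.2)

/-- Two faces are adjacent if they are distinct and share an edge. -/
def FacesAdj (E : PlaneEmbedding G) (f g : E.Face) : Prop :=
  f ≠ g ∧ ∃ e, e ∈ E.faceEdges f ∧ e ∈ E.faceEdges g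

/-- `n_i(v)`: the number of faces of length `i` incident to `v`. -/
noncomputable def nIncident (E : PlaneEmbedding G) (i : ℕ) (v : V) : ℕ :=
  {f : E.Face | E.faceLen f = i ∧ E.IncidentVF v f}.ncard

/-- `m_i(v)`: the number of pendent `i`-faces of `v`, i.e. faces of length `i` not
incident to `v` but incident to a 3-vertex adjacent to `v`. -/
noncomputable def mPendent (E : PlaneEmbedding G) (i : ℕ) (v : V) : ℕ :=
  {f : E.Face | E.faceLen f = i ∧ ¬ E.IncidentVF v f ∧
    ∃ u, G.Adj v u ∧ G.degree u = 3 ∧ E.IncidentVF u f}.ncard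

/-- A terrible 3-vertex of a face `f`: a 3-vertex on `f` with a neighbor of degree
at most 4 not on `f`. -/
def Terrible (E : PlaneEmbedding G) (f : E.Face) (u : V) : Prop :=
  G.degree u = 3 ∧ E.IncidentVF u f ∧
    ∃ w, G.Adj u w ∧ ¬ E.IncidentVF w f ∧ G.degree w ≤ 4

/-- A poor 3-face: a 3-face incident to two terrible 3-vertices. -/
def PoorFace (E : PlaneEmbedding G) (f : E.Face) : Prop :=
  E.faceLen f = 3 ∧ ∃ u₁ u₂, u₁ ≠ u₂ ∧ E.Terrible f u₁ ∧ E.Terrible f u₂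

end PlaneEmbedding

/-- `G` is 2-connected: at least 3 vertices and removing any vertex leaves a
connected graph. -/
def TwoConnected {V : Type} [Fintype V] (G : SimpleGraph V) : Prop :=
  3 ≤ Fintype.card V ∧ ∀ v : V, (G.induce ({v}ᶜ : Set V)).Connected

section SevenFaceProof

variable {V : Type} [Fintype V] [DecidableEq V] {G : SimpleGraph V} [DecidableRel G.Adj]

private lemma aux_cycle4 (h4 : NoCycleLen G 4) {a b c d : V}
    (hab : G.Adj a b) (hbc : G.Adj b c) (hcd : G.Adj c d) (hda : G.Adj d a)
    (hac : a ≠ c) (hbd : b ≠ d) : False := by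
  refine h4 a (.cons hab (.cons hbc (.cons hcd (.cons hda .nil)))) ?_ (by simp)
  have := hab.ne; have := hbc.ne; have := hcd.ne; have := hda.ne
  simp [Walk.isCycle_def, Walk.isTrail_def, Sym2.eq_iff]
  aesop

private lemma aux_cycle6 (h6 : NoCycleLen G 6) {a b c d e f : V}
    (hab : G.Adj a b) (hbc : G.Adj b c) (hcd : G.Adj c d) (hde : G.Adj d e)
    (hef : G.Adj e f) (hfa : G.Adj f a)
    (hac : a ≠ c) (had : a ≠ d) (hae : a ≠ e) (hbd : b ≠ d) (hbe : b ≠ e)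
    (hbf : b ≠ f) (hce : c ≠ e) (hcf : c ≠ f) (hdf : d ≠ f) : False := by
  refine h6 a (.cons hab (.cons hbc (.cons hcd (.cons hde (.cons hef (.cons hfa .nil)))))) ?_
    (by simp)
  have := hab.ne; have := hbc.ne; have := hcd.ne; have := hde.ne; have := hef.ne; have := hfa.ne
  simp [Walk.isCycle_def, Walk.isTrail_def, Sym2.eq_iff]
  aesop

private lemma aux_third_neighbor {a p n : V} (hp : G.Adj a p) (hn : G.Adj a n) (hpn : p ≠ n)
    (hdeg : G.degree a = 3) :
    ∃ t, G.Adj a t ∧ t ≠ p ∧ t ≠ n ∧ ∀ z, G.Adj a z → z = p ∨ z = n ∨ z = t := by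
  classical
  have hsub : ({p, n} : Finset V) ⊆ G.neighborFinset a := by
    intro z hz; simp at hz; rcases hz with rfl | rfl <;> simp [hp, hn]
  have hcard : ((G.neighborFinset a) \ {p, n}).card = 1 := by
    rw [Finset.card_sdiff_of_subset hsub, card_neighborFinset_eq_degree, hdeg,
      Finset.card_insert_of_notMem (by simp [hpn]), Finset.card_singleton]
  obtain ⟨t, ht⟩ := Finset.card_eq_one.mp hcard
  have htm : t ∈ (G.neighborFinset a) \ {p, n} := ht ▸ Finset.mem_singleton_self t
  simp only [Finset.mem_sdiff, mem_neighborFinset, Finset.mem_insert,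
    Finset.mem_singleton] at htm
  refine ⟨t, htm.1, fun h => htm.2 (Or.inl h), fun h => htm.2 (Or.inr h), ?_⟩
  intro z hz
  by_cases hzp : z = p; · exact Or.inl hzp
  by_cases hzn : z = n; · exact Or.inr (Or.inl hzn)
  have : z ∈ (G.neighborFinset a) \ {p, n} := by simp [hz, hzp, hzn]
  rw [ht] at this; simp at this; exact Or.inr (Or.inr this)

private lemma aux_stepA {p a n : V} (hpa : G.Adj p a) (han : G.Adj a n)
    (hdeg : G.degree a = 3) (hpn' : p ≠ n)
    (htri : ∃ x y, x ≠ y ∧ G.Adj a x ∧ G.Adj a y ∧ G.Adj x y)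
    (hpn : ¬ G.Adj p n) :
    (∃ u, G.Adj p u ∧ G.Adj a u) ∨ (∃ u, G.Adj a u ∧ G.Adj n u) := by
  obtain ⟨x, y, hxy, hax, hay, hxyadj⟩ := htri
  obtain ⟨t, hat, htp, htn, huniq⟩ := aux_third_neighbor hpa.symm han hpn' hdeg
  rcases huniq x hax with rfl | rfl | rfl <;> rcases huniq y hay with rfl | rfl | rfl <;>
    first
      | exact absurd rfl hxy
      | exact absurd hxyadj hpn
      | exact absurd hxyadj.symm hpn
      | exact Or.inl ⟨_, hxyadj, hat⟩
      | exact Or.inl ⟨_, hxyadj.symm, hat⟩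
      | exact Or.inr ⟨_, hat, hxyadj⟩
      | exact Or.inr ⟨_, hat, hxyadj.symm⟩

private lemma aux_stepB (h4 : NoCycleLen G 4) {a b c : V} (hab : G.Adj a b) (hbc : G.Adj b c)
    (hdeg : G.degree b = 3) (hac : a ≠ c) (hnac : ¬ G.Adj a c)
    (hC1 : ∃ u, G.Adj a u ∧ G.Adj b u) (hC2 : ∃ u, G.Adj b u ∧ G.Adj c u) : False := by
  obtain ⟨t, hbt, hta, htc, huniq⟩ := aux_third_neighbor hab.symm hbc hac hdeg
  obtain ⟨u, hau, hbu⟩ := hC1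
  obtain ⟨w, hbw, hwc⟩ := hC2
  rcases huniq u hbu with rfl | rfl | rfl
  · exact G.loopless.irrefl _ hau
  · exact hnac hau
  · rcases huniq w hbw with rfl | rfl | rfl
    · exact hnac hwc.symm
    · exact G.loopless.irrefl _ hwc
    · exact aux_cycle4 h4 hau hwc.symm hbc.symm hab.symm hac hbu.ne'

private lemma aux_tri_of_face (E : PlaneEmbedding G) {g : E.Face} (h3 : E.faceLen g = 3)
    {w : V} (hw : E.IncidentVF w g) :
    ∃ x y, x ≠ y ∧ G.Adj w x ∧ G.Adj w y ∧ G.Adj x y := by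
  obtain ⟨x, y, z, hl⟩ := List.length_eq_three.mp h3
  have hb := E.boundary_walk g
  have hw' : w ∈ E.boundary g := hw
  rw [hl] at hb hw'
  simp only [List.cons_append, List.nil_append, List.take, List.Chain', List.isChain_cons_cons,
    List.isChain_singleton, and_true] at hb
  obtain ⟨hxy, hyz, hzx⟩ := hb
  simp only [List.mem_cons, List.not_mem_nil, or_false] at hw'
  rcases hw' with rfl | rfl | rfl
  · exact ⟨y, z, hyz.ne, hxy, hzx.symm, hyz⟩
  · exact ⟨x, z, fun h => hzx.ne h.symm, hxy.symm, hyz, hzx.symm⟩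
  · exact ⟨x, y, hxy.ne, hzx, hyz.symm, hxy⟩

private lemma aux_len7 {α : Type} {l : List α} (h : l.length = 7) :
    ∃ a b c d e f g, l = [a, b, c, d, e, f, g] := by
  match l, h with
  | [a, b, c, d, e, f, g], _ => exact ⟨a, b, c, d, e, f, g, rfl⟩

end SevenFaceProof

set_option maxHeartbeats 1000000 in
theorem seven_face_at_most_six_special_vertices {V : Type} [Fintype V] [DecidableEq V]
    (G : SimpleGraph V) [DecidableRel G.Adj] (E : PlaneEmbedding G)
    (h2conn : TwoConnected G)
    (h4 : NoCycleLen G 4) (h6 : NoCycleLen G 6) :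
    ∀ f : E.Face, E.faceLen f = 7 →
      {w : V | E.IncidentVF w f ∧ G.degree w = 3 ∧
        ∃ g : E.Face, E.faceLen g = 3 ∧ E.IncidentVF w g}.ncard ≤ 6 := by
  classical
  intro f hf
  by_contra hcon
  push_neg at hcon
  set S := {w : V | E.IncidentVF w f ∧ G.degree w = 3 ∧
      ∃ g : E.Face, E.faceLen g = 3 ∧ E.IncidentVF w g} with hS
  have hlen : (E.boundary f).length = 7 := hf
  have hsub : S ⊆ ↑(E.boundary f).toFinset := by
    intro w hw
    simp only [Finset.coe_sort_coe, Finset.mem_coe, List.mem_toFinset]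
    exact hw.1
  have hfin : (↑(E.boundary f).toFinset : Set V).Finite := (E.boundary f).toFinset.finite_toSet
  have hle : S.ncard ≤ (E.boundary f).toFinset.card := by
    rw [← Set.ncard_coe_finset]; exact Set.ncard_le_ncard hsub hfin
  have hcard7 : (E.boundary f).toFinset.card ≤ 7 :=
    le_trans (E.boundary f).toFinset_card_le (le_of_eq hlen)
  have h7 : S.ncard = 7 := le_antisymm (hle.trans hcard7) hcon
  have hts : (E.boundary f).toFinset.card = 7 := le_antisymm hcard7 (h7 ▸ hle)
  have hSeq : S = ↑(E.boundary f).toFinset :=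
    Set.eq_of_subset_of_ncard_le hsub (by rw [Set.ncard_coe_finset, hts, h7]) hfin
  have hall : ∀ w ∈ E.boundary f, G.degree w = 3 ∧
      ∃ g : E.Face, E.faceLen g = 3 ∧ E.IncidentVF w g := by
    intro w hw
    have : w ∈ S := by rw [hSeq]; simpa using hw
    exact this.2
  have hnd : (E.boundary f).Nodup := by
    have hdl : (E.boundary f).dedup.length = (E.boundary f).length := by
      rw [← List.card_toFinset, hts, hlen]
    exact List.dedup_eq_self.mp ((E.boundary f).dedup_sublist.eq_of_length hdl)
  obtain ⟨a0, a1, a2, a3, a4, a5, a6, hL⟩ := aux_len7 hlen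
  have hb := E.boundary_walk f
  rw [hL] at hb hall hnd
  simp only [List.cons_append, List.nil_append, List.take, List.Chain', List.isChain_cons_cons,
    List.isChain_singleton, and_true] at hb
  obtain ⟨h01, h12, h23, h34, h45, h56, h60⟩ := hb
  simp only [List.nodup_cons, List.mem_cons, List.not_mem_nil, or_false, not_or,
    List.nodup_nil, and_true] at hnd
  obtain ⟨⟨n01, n02, n03, n04, n05, n06⟩, ⟨n12, n13, n14, n15, n16⟩,
    ⟨n23, n24, n25, n26⟩, ⟨n34, n35, n36⟩, ⟨n45, n46⟩, n56⟩ := hnd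
  -- per-vertex facts
  have P0 := hall a0 (by simp); have P1 := hall a1 (by simp); have P2 := hall a2 (by simp)
  have P3 := hall a3 (by simp); have P4 := hall a4 (by simp); have P5 := hall a5 (by simp)
  have P6 := hall a6 (by simp)
  obtain ⟨d0, g0, hg0, hw0⟩ := P0; obtain ⟨d1, g1, hg1, hw1⟩ := P1
  obtain ⟨d2, g2, hg2, hw2⟩ := P2; obtain ⟨d3, g3, hg3, hw3⟩ := P3
  obtain ⟨d4, g4, hg4, hw4⟩ := P4; obtain ⟨d5, g5, hg5, hw5⟩ := P5
  obtain ⟨d6, g6, hg6, hw6⟩ := P6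
  have T0 := aux_tri_of_face E hg0 hw0; have T1 := aux_tri_of_face E hg1 hw1
  have T2 := aux_tri_of_face E hg2 hw2; have T3 := aux_tri_of_face E hg3 hw3
  have T4 := aux_tri_of_face E hg4 hw4; have T5 := aux_tri_of_face E hg5 hw5
  have T6 := aux_tri_of_face E hg6 hw6
  -- no chords at distance 2
  have nc0 : ¬ G.Adj a0 a2 := fun h =>
    aux_cycle6 h6 h h23 h34 h45 h56 h60 n03 n04 n05 n24 n25 n26 n35 n36 n46
  have nc1 : ¬ G.Adj a1 a3 := fun h =>
    aux_cycle6 h6 h h34 h45 h56 h60 h01 n14 n15 n16 n35 n36 (Ne.symm n03) n46 (Ne.symm n04) (Ne.symm n05)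
  have nc2 : ¬ G.Adj a2 a4 := fun h =>
    aux_cycle6 h6 h h45 h56 h60 h01 h12 n25 n26 (Ne.symm n02) n46 (Ne.symm n04) (Ne.symm n14) (Ne.symm n05) (Ne.symm n15) (Ne.symm n16)
  have nc3 : ¬ G.Adj a3 a5 := fun h =>
    aux_cycle6 h6 h h56 h60 h01 h12 h23 n36 (Ne.symm n03) (Ne.symm n13) (Ne.symm n05) (Ne.symm n15) (Ne.symm n25) (Ne.symm n16) (Ne.symm n26) n02
  have nc4 : ¬ G.Adj a4 a6 := fun h =>
    aux_cycle6 h6 h h60 h01 h12 h23 h34 (Ne.symm n04) (Ne.symm n14) (Ne.symm n24) (Ne.symm n16) (Ne.symm n26) (Ne.symm n36) n02 n03 n13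
  have nc5 : ¬ G.Adj a5 a0 := fun h =>
    aux_cycle6 h6 h h01 h12 h23 h34 h45 (Ne.symm n15) (Ne.symm n25) (Ne.symm n35) n02 n03 n04 n13 n14 n24
  have nc6 : ¬ G.Adj a6 a1 := fun h =>
    aux_cycle6 h6 h h12 h23 h34 h45 h56 (Ne.symm n26) (Ne.symm n36) (Ne.symm n46) n13 n14 n15 n24 n25 n35
  -- alternation facts
  have A0 := aux_stepA h60 h01 d0 (Ne.symm n16) T0 nc6
  have A1 := aux_stepA h01 h12 d1 n02 T1 nc0
  have A2 := aux_stepA h12 h23 d2 n13 T2 nc1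
  have A3 := aux_stepA h23 h34 d3 n24 T3 nc2
  have A4 := aux_stepA h34 h45 d4 n35 T4 nc3
  have A5 := aux_stepA h45 h56 d5 n46 T5 nc4
  have A6 := aux_stepA h56 h60 d6 (Ne.symm n05) T6 nc5
  have B0 := fun hx hy => aux_stepB h4 h01 h12 d1 n02 nc0 hx hy
  have B1 := fun hx hy => aux_stepB h4 h12 h23 d2 n13 nc1 hx hy
  have B2 := fun hx hy => aux_stepB h4 h23 h34 d3 n24 nc2 hx hy
  have B3 := fun hx hy => aux_stepB h4 h34 h45 d4 n35 nc3 hx hy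
  have B4 := fun hx hy => aux_stepB h4 h45 h56 d5 n46 nc4 hx hy
  have B5 := fun hx hy => aux_stepB h4 h56 h60 d6 (Ne.symm n05) nc5 hx hy
  have B6 := fun hx hy => aux_stepB h4 h60 h01 d0 (Ne.symm n16) nc6 hx hy
  rcases A1 with hC0 | hC1
  · have hC2 := A2.resolve_left (fun h => B0 hC0 h)
    have hC4 := A4.resolve_left (fun h => B2 hC2 h)
    have hC6 := A6.resolve_left (fun h => B4 hC4 h)
    exact B6 hC6 hC0
  · have hC3 := A3.resolve_left (fun h => B1 hC1 h)
    have hC5 := A5.resolve_left (fun h => B3 hC3 h)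
    have hC0 := A0.resolve_left (fun h => B5 hC5 h)
    exact B0 hC0 hC1
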